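/- Let P ≥ 0, k = sqrt((P+1)² + 1), h = 1 − sqrt((k−1)/(k+1)), and define f : [0,1] → ℝ by f(x) = (k−1)/(1−x)³ for 0 ≤ x < h and f(x) = 0 for h ≤ x ≤ 1. Then f is a probability density: ∫_0^1 f(x) dx = 1, and its mean is ∫_0^1 x·f(x) dx = k − (P+1). -/

import Mathlib

open MeasureTheory

theorem stmt4 (P : ℝ) (hP : 0 ≤ P) (k h : ℝ)
    (hk : k = Real.sqrt ((P + 1) ^ 2 + 1))
    (hh : h = 1 - Real.sqrt ((k - 1) / (k + 1)))
    (f : ℝ → ℝ)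
    (hf : ∀ x ∈ Set.Icc (0 : ℝ) 1,
      f x = if x < h then (k - 1) / (1 - x) ^ 3 else 0) :
    (∫ x in (0 : ℝ)..1, f x) = 1 ∧
    (∫ x in (0 : ℝ)..1, x * f x) = k - (P + 1) := by
  have hk0 : 0 ≤ k := hk ▸ Real.sqrt_nonneg _
  have hk2 : k ^ 2 = (P + 1) ^ 2 + 1 := by
    rw [hk]; exact Real.sq_sqrt (by positivity)
  have hk1 : 1 < k := by nlinarith
  set u := Real.sqrt ((k - 1) / (k + 1)) with hu
  have hu2 : u ^ 2 = (k - 1) / (k + 1) :=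
    Real.sq_sqrt (div_nonneg (by linarith) (by linarith))
  have hu0 : 0 < u := Real.sqrt_pos.mpr (div_pos (by linarith) (by linarith))
  have hdlt : (k - 1) / (k + 1) < 1 := by
    rw [div_lt_one (by linarith)]; linarith
  have hu1 : u < 1 := by nlinarith [hu2]
  have h0 : 0 < h := by rw [hh]; linarith
  have h1 : h < 1 := by rw [hh]; linarith
  have huh : 1 - h = u := by rw [hh]; ring
  have hu2' : u ^ 2 * (k + 1) = k - 1 := by
    rw [hu2]; field_simp
  have hkey : k - 1 = u * (P + 1) := by
    have hsq : (k - 1) ^ 2 = (u * (P + 1)) ^ 2 := by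
      have : (u * (P + 1)) ^ 2 = u ^ 2 * (P + 1) ^ 2 := by ring
      rw [this, hu2]
      field_simp
      nlinarith
    nlinarith [mul_pos hu0 (show (0:ℝ) < P + 1 by linarith)]
  -- continuity of the nonzero pieces on [0, h]
  have hne : ∀ x ∈ Set.uIcc (0:ℝ) h, (1 : ℝ) - x ≠ 0 := by
    intro x hx
    rw [Set.uIcc_of_le h0.le] at hx
    have : x < 1 := lt_of_le_of_lt hx.2 h1
    intro hc; linarith
  have hcont : ContinuousOn (fun x => (k - 1) / (1 - x) ^ 3) (Set.uIcc (0:ℝ) h) := by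
    apply ContinuousOn.div continuousOn_const (by fun_prop)
    intro x hx
    exact pow_ne_zero _ (hne x hx)
  have hcont2 : ContinuousOn (fun x => x * ((k - 1) / (1 - x) ^ 3)) (Set.uIcc (0:ℝ) h) :=
    (continuousOn_id).mul hcont
  -- FTC computations
  have hFTC1 : (∫ x in (0:ℝ)..h, (k - 1) / (1 - x) ^ 3)
      = (k - 1) / (2 * (1 - h) ^ 2) - (k - 1) / (2 * (1 - 0) ^ 2) := by
    apply intervalIntegral.integral_eq_sub_of_hasDerivAt
      (f := fun y => (k - 1) / (2 * (1 - y) ^ 2))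
    · intro x hx
      have hx1 : (1:ℝ) - x ≠ 0 := hne x (by
        rwa [Set.uIcc_of_le h0.le] at hx ⊢ <;> exact hx)
      have d1 : HasDerivAt (fun y : ℝ => 1 - y) (-1) x := by
        simpa using (hasDerivAt_id x).const_sub 1
      have d2 : HasDerivAt (fun y : ℝ => 2 * (1 - y) ^ 2)
          (2 * ((2:ℕ) * (1 - x) ^ 1 * (-1))) x := (d1.pow 2).const_mul 2
      have d3 := (hasDerivAt_const x (k - 1)).div d2
        (mul_ne_zero two_ne_zero (pow_ne_zero _ hx1))
      convert d3 using 1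
      · rfl
      · rfl
      push_cast
      field_simp
      ring
    · exact hcont.intervalIntegrable
  have hFTC2 : (∫ x in (0:ℝ)..h, x * ((k - 1) / (1 - x) ^ 3))
      = (k - 1) * (1 / (2 * (1 - h) ^ 2) - 1 / (1 - h))
        - (k - 1) * (1 / (2 * (1 - (0:ℝ)) ^ 2) - 1 / (1 - 0)) := by
    apply intervalIntegral.integral_eq_sub_of_hasDerivAt
      (f := fun y => (k - 1) * (1 / (2 * (1 - y) ^ 2) - 1 / (1 - y)))
    · intro x hx
      have hx1 : (1:ℝ) - x ≠ 0 := hne x (by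
        rwa [Set.uIcc_of_le h0.le] at hx ⊢ <;> exact hx)
      have d1 : HasDerivAt (fun y : ℝ => 1 - y) (-1) x := by
        simpa using (hasDerivAt_id x).const_sub 1
      have d2 : HasDerivAt (fun y : ℝ => 2 * (1 - y) ^ 2)
          (2 * ((2:ℕ) * (1 - x) ^ 1 * (-1))) x := (d1.pow 2).const_mul 2
      have e1 := (hasDerivAt_const x (1:ℝ)).div d2
        (mul_ne_zero two_ne_zero (pow_ne_zero _ hx1))
      have e2 := (hasDerivAt_const x (1:ℝ)).div d1 hx1
      have d3 := (e1.sub e2).const_mul (k - 1)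
      convert d3 using 1
      · rfl
      · rfl
      push_cast
      field_simp
      ring
    · exact hcont2.intervalIntegrable
  -- reduce the integrals of f to the nice pieces
  have haeh : ∀ᵐ (x : ℝ), x ≠ h := by
    have : volume ({h} : Set ℝ) = 0 := Real.volume_singleton
    rw [MeasureTheory.ae_iff]
    simpa using this
  have haefg1 : ∀ᵐ (x : ℝ), x ∈ Set.uIoc (0:ℝ) h → f x = (k - 1) / (1 - x) ^ 3 := by
    filter_upwards [haeh] with x hxh hx
    rw [Set.uIoc_of_le h0.le] at hx
    rw [hf x ⟨hx.1.le, le_trans hx.2 h1.le⟩, if_pos (lt_of_le_of_ne hx.2 hxh)]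
  have haefg2 : ∀ᵐ (x : ℝ), x ∈ Set.uIoc (0:ℝ) h →
      x * f x = x * ((k - 1) / (1 - x) ^ 3) := by
    filter_upwards [haefg1] with x hx1 hx
    rw [hx1 hx]
  have haezero : ∀ x ∈ Set.uIcc h (1:ℝ), f x = 0 := by
    intro x hx
    rw [Set.uIcc_of_le h1.le] at hx
    rw [hf x ⟨le_trans h0.le hx.1, hx.2⟩, if_neg (not_lt.mpr hx.1)]
  have hint1 : IntervalIntegrable f volume 0 h := by
    apply hcont.intervalIntegrable.congr_ae
    rw [Filter.EventuallyEq, MeasureTheory.ae_restrict_iff' measurableSet_uIoc]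
    filter_upwards [haefg1] with x hx1 hx
    exact (hx1 hx).symm
  have hint2 : IntervalIntegrable (fun x => x * f x) volume 0 h := by
    apply hcont2.intervalIntegrable.congr_ae
    rw [Filter.EventuallyEq, MeasureTheory.ae_restrict_iff' measurableSet_uIoc]
    filter_upwards [haefg2] with x hx1 hx
    exact (hx1 hx).symm
  have hint1' : IntervalIntegrable f volume h 1 := by
    apply (intervalIntegrable_const (c := (0:ℝ))).congr_ae
    rw [Filter.EventuallyEq, MeasureTheory.ae_restrict_iff' measurableSet_uIoc]
    filter_upwards with x hx
    exact (haezero x (Set.uIoc_subset_uIcc hx)).symm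
  have hint2' : IntervalIntegrable (fun x => x * f x) volume h 1 := by
    apply (intervalIntegrable_const (c := (0:ℝ))).congr_ae
    rw [Filter.EventuallyEq, MeasureTheory.ae_restrict_iff' measurableSet_uIoc]
    filter_upwards with x hx
    rw [haezero x (Set.uIoc_subset_uIcc hx), mul_zero]
  have hsplit1 : (∫ x in (0:ℝ)..1, f x)
      = (∫ x in (0:ℝ)..h, f x) + ∫ x in h..(1:ℝ), f x :=
    (intervalIntegral.integral_add_adjacent_intervals hint1 hint1').symm
  have hsplit2 : (∫ x in (0:ℝ)..1, x * f x)
      = (∫ x in (0:ℝ)..h, x * f x) + ∫ x in h..(1:ℝ), x * f x :=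
    (intervalIntegral.integral_add_adjacent_intervals hint2 hint2').symm
  have hleft1 : (∫ x in (0:ℝ)..h, f x) = ∫ x in (0:ℝ)..h, (k - 1) / (1 - x) ^ 3 :=
    intervalIntegral.integral_congr_ae haefg1
  have hleft2 : (∫ x in (0:ℝ)..h, x * f x)
      = ∫ x in (0:ℝ)..h, x * ((k - 1) / (1 - x) ^ 3) :=
    intervalIntegral.integral_congr_ae haefg2
  have hright1 : (∫ x in h..(1:ℝ), f x) = 0 := by
    rw [show (0:ℝ) = ∫ x in h..(1:ℝ), (0:ℝ) by simp]
    apply intervalIntegral.integral_congr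
    intro x hx
    exact haezero x hx
  have hright2 : (∫ x in h..(1:ℝ), x * f x) = 0 := by
    rw [show (0:ℝ) = ∫ x in h..(1:ℝ), (0:ℝ) by simp]
    apply intervalIntegral.integral_congr
    intro x hx
    show x * f x = 0
    rw [haezero x hx, mul_zero]
  clear_value u
  have hkm : k - 1 ≠ 0 := by linarith
  have hkp : k + 1 ≠ 0 := by linarith
  have hun : u ≠ 0 := hu0.ne'
  have e2 : (k - 1) * (1 / (2 * u ^ 2)) = (k + 1) / 2 := by
    rw [hu2]; field_simp
  have e3 : (k - 1) * (1 / u) = P + 1 := by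
    rw [hkey]; field_simp
  constructor
  · rw [hsplit1, hright1, hleft1, hFTC1, huh]
    have : (k - 1) / (2 * u ^ 2) = (k - 1) * (1 / (2 * u ^ 2)) := by ring
    rw [this, e2]
    norm_num
    linarith
  · rw [hsplit2, hright2, hleft2, hFTC2, huh]
    have : (k - 1) * (1 / (2 * u ^ 2) - 1 / u)
        = (k - 1) * (1 / (2 * u ^ 2)) - (k - 1) * (1 / u) := by ring
    rw [this, e2, e3]
    norm_num
    linarith
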